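/- Let σ : ℝ → ℝ, let u : ℝ × ℝ → ℝ and fix a point (s, t). Assume that the function x ↦ u(x, t) is differentiable on a neighborhood of s with second derivative u_ss(s,t) at s, and that the function r ↦ u(s, r) is differentiable at t with derivative u_t(s,t). Then the T-shape finite difference quotient (u(s,t) − u(s, t − dt))/dt + (σ(t)²/2)·s²·(u(s + ds, t) − 2·u(s,t) + u(s − ds, t))/ds² converges to 𝓛u(s,t) = u_t(s,t) + (σ(t)²/2)·s²·u_ss(s,t) as (dt, ds) → (0⁺, 0⁺) (limit along the product of the filters of positive numbers tending to 0). -/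

import Mathlib

open Filter Topology

/-- Central second difference quotient converges to the second derivative. -/
lemma central_second_diff (v vs : ℝ → ℝ) (s vss : ℝ)
    (hv : ∀ᶠ x in 𝓝 s, HasDerivAt v (vs x) x)
    (hvss : HasDerivAt vs vss s) :
    Tendsto (fun h : ℝ => (v (s + h) - 2 * v s + v (s - h)) / h ^ 2)
      (𝓝[>] (0 : ℝ)) (𝓝 vss) := by
  obtain ⟨δ₀, hδ₀pos, hδ₀⟩ := Metric.eventually_nhds_iff.1 hv
  rw [Metric.tendsto_nhdsWithin_nhds]
  intro ε hε
  have hslope := hasDerivAt_iff_tendsto_slope.1 hvss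
  rw [Metric.tendsto_nhdsWithin_nhds] at hslope
  obtain ⟨δ₁, hδ₁pos, hδ₁⟩ := hslope ε hε
  refine ⟨min δ₀ δ₁, lt_min hδ₀pos hδ₁pos, ?_⟩
  intro h hh hdist
  rw [Real.dist_eq, sub_zero, abs_of_pos hh] at hdist
  have hhpos : (0:ℝ) < h := hh
  -- Cauchy MVT on [0, h]
  have hd : ∀ y ∈ Set.Icc (0:ℝ) h,
      HasDerivAt (fun y => v (s + y) + v (s - y)) (vs (s + y) - vs (s - y)) y := by
    intro y hy
    have hy0 := hy.1
    have hyh := hy.2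
    have h1 : HasDerivAt v (vs (s + y)) (s + y) := by
      apply hδ₀
      rw [Real.dist_eq]
      simpa [abs_of_nonneg hy0] using lt_of_le_of_lt hyh (lt_of_lt_of_le hdist (min_le_left _ _))
    have h2 : HasDerivAt v (vs (s - y)) (s - y) := by
      apply hδ₀
      rw [Real.dist_eq]
      have : |s - y - s| = y := by rw [abs_of_nonpos (by linarith)]; ring
      rw [this]
      exact lt_of_le_of_lt hyh (lt_of_lt_of_le hdist (min_le_left _ _))
    have g1 : HasDerivAt (fun y : ℝ => v (s + y)) (vs (s + y) * 1) y :=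
      h1.comp y ((hasDerivAt_id y).const_add s)
    have g2 : HasDerivAt (fun y : ℝ => v (s - y)) (vs (s - y) * (-1)) y :=
      h2.comp y ((hasDerivAt_id y).const_sub s)
    exact (g1.add g2).congr_deriv (by ring)
  obtain ⟨c, hc, hceq⟩ := exists_ratio_hasDerivAt_eq_ratio_slope
    (fun y => v (s + y) + v (s - y)) (fun y => vs (s + y) - vs (s - y)) hhpos
    (fun y hy => (hd y hy).continuousAt.continuousWithinAt)
    (fun y hy => hd y (Set.Ioo_subset_Icc_self hy))
    (fun y => y ^ 2) (fun y => 2 * y)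
    (by fun_prop)
    (fun y _ => by simpa using (hasDerivAt_pow 2 y))
  have hcpos := hc.1
  have hch := hc.2
  -- slope bounds at s + c and s - c
  have hcd : c < δ₁ := lt_of_lt_of_le (lt_trans hch hdist) (min_le_right _ _)
  have b1 : |(vs (s + c) - vs s) / c - vss| < ε := by
    have := hδ₁ (x := s + c) (by simp [hcpos.ne']) (by rw [Real.dist_eq]; simpa [abs_of_pos hcpos] using hcd)
    rw [Real.dist_eq] at this
    have heq : slope vs s (s + c) = (vs (s + c) - vs s) / c := by
      rw [slope_def_field, show s + c - s = c from by ring]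
    rwa [heq] at this
  have b2 : |(vs s - vs (s - c)) / c - vss| < ε := by
    have := hδ₁ (x := s - c) (by simp [hcpos.ne']) (by
      rw [Real.dist_eq]
      have : |s - c - s| = c := by rw [abs_of_nonpos (by linarith)]; ring
      rw [this]; exact hcd)
    rw [Real.dist_eq] at this
    have heq : slope vs s (s - c) = (vs s - vs (s - c)) / c := by
      rw [slope_def_field, show s - c - s = -c from by ring, div_neg, ← neg_div, neg_sub]
    rw [heq] at this
    exact this
  -- conclude
  have hceq' : (v (s + h) - 2 * v s + v (s - h)) / h ^ 2
      = (vs (s + c) - vs (s - c)) / (2 * c) := by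
    have hfh : ((fun y => v (s + y) + v (s - y)) h - (fun y => v (s + y) + v (s - y)) 0)
        = v (s + h) - 2 * v s + v (s - h) := by simp; ring
    field_simp at hceq ⊢
    nlinarith [hceq]
  rw [Real.dist_eq, hceq']
  have key : (vs (s + c) - vs (s - c)) / (2 * c) - vss
      = ((vs (s + c) - vs s) / c - vss) / 2 + ((vs s - vs (s - c)) / c - vss) / 2 := by
    field_simp
    ring
  rw [key]
  calc |((vs (s + c) - vs s) / c - vss) / 2 + ((vs s - vs (s - c)) / c - vss) / 2|
      ≤ |((vs (s + c) - vs s) / c - vss) / 2| + |((vs s - vs (s - c)) / c - vss) / 2| :=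
        abs_add_le _ _
    _ < ε := by rw [abs_div, abs_div]; simp only [abs_two]; linarith [b1, b2]

/-- Consistency of the T-shape finite difference scheme: if `x ↦ u(x,t)` is differentiable
near `s` (with derivative function `us`) and `us` has derivative `uss` at `s` (the second
space derivative), and `r ↦ u(s,r)` has derivative `ut` at `t`, then the T-shape difference
quotient converges to `𝓛u(s,t) = u_t + (σ(t)²/2) s² u_ss` as `(dt, ds) → (0⁺, 0⁺)`. -/
theorem tshape_scheme_consistency
    (σ : ℝ → ℝ) (u : ℝ × ℝ → ℝ) (s t : ℝ)
    (us : ℝ → ℝ) (ut uss : ℝ)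
    (hus : ∀ᶠ x in 𝓝 s, HasDerivAt (fun y => u (y, t)) (us x) x)
    (huss : HasDerivAt us uss s)
    (hut : HasDerivAt (fun r => u (s, r)) ut t) :
    Tendsto
      (fun p : ℝ × ℝ =>
        (u (s, t) - u (s, t - p.1)) / p.1
          + σ t ^ 2 / 2 * s ^ 2
            * ((u (s + p.2, t) - 2 * u (s, t) + u (s - p.2, t)) / p.2 ^ 2))
      ((𝓝[>] (0 : ℝ)) ×ˢ (𝓝[>] (0 : ℝ)))
      (𝓝 (ut + σ t ^ 2 / 2 * s ^ 2 * uss)) := by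
  have hA : Tendsto (fun dt : ℝ => (u (s, t) - u (s, t - dt)) / dt) (𝓝[>] (0:ℝ)) (𝓝 ut) := by
    have h := hasDerivAt_iff_tendsto_slope.1 hut
    have hmap : Tendsto (fun dt : ℝ => t - dt) (𝓝[>] (0:ℝ)) (𝓝[≠] t) := by
      apply tendsto_nhdsWithin_of_tendsto_nhds_of_eventually_within
      · have h0 : Tendsto (fun dt : ℝ => t - dt) (𝓝 (0:ℝ)) (𝓝 (t - 0)) :=
          tendsto_const_nhds.sub tendsto_id
        simpa using h0.mono_left nhdsWithin_le_nhds
      · filter_upwards [self_mem_nhdsWithin] with dt (hdt : 0 < dt)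
        simp only [Set.mem_compl_iff, Set.mem_singleton_iff]
        intro hc; linarith [sub_eq_self.1 hc]
    have := h.comp hmap
    refine this.congr' ?_
    filter_upwards [self_mem_nhdsWithin] with dt (hdt : 0 < dt)
    simp only [Function.comp_apply, slope_def_field]
    rw [show t - dt - t = -dt from by ring, div_neg, ← neg_div, neg_sub]
  have hB := central_second_diff (fun y => u (y, t)) us s uss hus huss
  have h1 : Tendsto (fun p : ℝ × ℝ => (u (s, t) - u (s, t - p.1)) / p.1)
      ((𝓝[>] (0:ℝ)) ×ˢ (𝓝[>] (0:ℝ))) (𝓝 ut) := hA.comp tendsto_fst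
  have h2 : Tendsto (fun p : ℝ × ℝ =>
      σ t ^ 2 / 2 * s ^ 2 * ((u (s + p.2, t) - 2 * u (s, t) + u (s - p.2, t)) / p.2 ^ 2))
      ((𝓝[>] (0:ℝ)) ×ˢ (𝓝[>] (0:ℝ))) (𝓝 (σ t ^ 2 / 2 * s ^ 2 * uss)) := by
    have := (hB.comp (tendsto_snd : Tendsto Prod.snd ((𝓝[>] (0:ℝ)) ×ˢ (𝓝[>] (0:ℝ))) _))
    have := this.const_mul (σ t ^ 2 / 2 * s ^ 2)
    simpa [Function.comp, mul_assoc] using this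
  exact h1.add h2
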